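/- Let (G_ω, r) be a strictly increasing weighted tree with edge ideal I(G_ω). Then for all subsets W₁ ⊊ W₂ of the minimal generating set G(I(G_ω)), the least common multiples satisfy lcm(W₁) ≠ lcm(W₂). -/

import Mathlib

open MvPolynomial SimpleGraph

/-- The weight function `ω` on the edges of `G` is weakly increasing along every
simple path from a leaf to the root `r`. -/
def IsIncreasingRoot {n : ℕ} (G : SimpleGraph (Fin n)) [DecidableRel G.Adj]
    (ω : Sym2 (Fin n) → ℕ) (r : Fin n) : Prop :=
  ∀ v : Fin n, G.degree v = 1 → ∀ p : G.Walk v r, p.IsPath →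
    ∀ i : ℕ, i + 2 < p.support.length →
      ω s(p.support.getD i v, p.support.getD (i + 1) v) ≤
        ω s(p.support.getD (i + 1) v, p.support.getD (i + 2) v)

/-- The weight function `ω` is strictly increasing along every simple path from a leaf
to the root `r`. -/
def IsStrictlyIncreasingRoot {n : ℕ} (G : SimpleGraph (Fin n)) [DecidableRel G.Adj]
    (ω : Sym2 (Fin n) → ℕ) (r : Fin n) : Prop :=
  ∀ v : Fin n, G.degree v = 1 → ∀ p : G.Walk v r, p.IsPath →
    ∀ i : ℕ, i + 2 < p.support.length →
      ω s(p.support.getD i v, p.support.getD (i + 1) v) <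
        ω s(p.support.getD (i + 1) v, p.support.getD (i + 2) v)

/-- A vertex `v₂` is special: there is a simple path `v₁ → v₂ → v₃ → ⋯ → r` from a leaf `v₁`
of length at least 2 with `ω(v₁v₂) = ω(v₂v₃)`. -/
def IsSpecialVertex {n : ℕ} (G : SimpleGraph (Fin n)) [DecidableRel G.Adj]
    (ω : Sym2 (Fin n) → ℕ) (r : Fin n) (v₂ : Fin n) : Prop :=
  ∃ (v₁ : Fin n) (p : G.Walk v₁ r), G.degree v₁ = 1 ∧ p.IsPath ∧ 2 ≤ p.length ∧
    p.support.getD 1 v₁ = v₂ ∧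
    ω s(p.support.getD 0 v₁, p.support.getD 1 v₁) =
      ω s(p.support.getD 1 v₁, p.support.getD 2 v₁)

/-- An edge `uv` is special: there is a simple path `v₁ → u → v → ⋯ → r` (at least 3 vertices)
with `ω(v₁u) = ω(uv)`. -/
def IsSpecialEdge {n : ℕ} (G : SimpleGraph (Fin n))
    (ω : Sym2 (Fin n) → ℕ) (r : Fin n) (e : Sym2 (Fin n)) : Prop :=
  ∃ (v₁ : Fin n) (p : G.Walk v₁ r), p.IsPath ∧ 2 ≤ p.length ∧
    e = s(p.support.getD 1 v₁, p.support.getD 2 v₁) ∧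
    ω s(p.support.getD 0 v₁, p.support.getD 1 v₁) =
      ω s(p.support.getD 1 v₁, p.support.getD 2 v₁)

/-- `μ(v)`: the maximal weight of an edge at `v`. -/
def muWeight {n : ℕ} (G : SimpleGraph (Fin n)) [DecidableRel G.Adj]
    (ω : Sym2 (Fin n) → ℕ) (v : Fin n) : ℕ :=
  (G.neighborFinset v).sup fun u => ω s(u, v)

/-- The set `A(G_ω)` of vertices admitting a simple path `v = v₁ → ⋯ → v_{2m}` (`m ≥ 1`)
with `ω(v_{2m-1}v_{2m}) < μ(v_{2m})`. -/
def Aset {n : ℕ} (G : SimpleGraph (Fin n)) [DecidableRel G.Adj]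
    (ω : Sym2 (Fin n) → ℕ) : Set (Fin n) :=
  {v | ∃ (m : ℕ) (w : Fin n) (p : G.Walk v w), 1 ≤ m ∧ p.IsPath ∧
    p.support.length = 2 * m ∧
    ω s(p.support.getD (2 * m - 2) v, w) < muWeight G ω w}

/-- The exponent vector of the monomial generator `(x_i x_j)^{ω(e)}` attached to an
edge `e = {i, j}`; the lcm of a set of such monomials has exponent vector the
pointwise sup (`Finset.sup`) of the exponent vectors. -/
def edgeExp {n : ℕ} (ω : Sym2 (Fin n) → ℕ) (e : Sym2 (Fin n)) : Fin n → ℕ :=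
  fun x => if x ∈ e then ω e else 0

section AuxLcm

variable {n : ℕ} {G : SimpleGraph (Fin n)}

private lemma auxGetD {α : Type*} (l : List α) (i : ℕ) (h : i < l.length) (d d' : α) :
    l.getD i d = l.getD i d' := by
  rw [List.getD_eq_getElem?_getD, List.getD_eq_getElem?_getD, List.getElem?_eq_getElem h]
  rfl

private lemma auxEdgeMem (hac : G.IsAcyclic) {x y r : Fin n} (p : G.Walk x r)
    (hp : p.IsPath) (h : G.Adj x y) (hy : y ∈ p.support) : s(x, y) ∈ p.edges := by
  have huniq := SimpleGraph.isAcyclic_iff_path_unique.mp hac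
  have h1 : (SimpleGraph.Walk.cons h SimpleGraph.Walk.nil : G.Walk x y).IsPath := by
    rw [SimpleGraph.Walk.cons_isPath_iff]
    simp [h.ne]
  have h2 := huniq ⟨p.takeUntil y hy, hp.takeUntil hy⟩ ⟨SimpleGraph.Walk.cons h SimpleGraph.Walk.nil, h1⟩
  have h3 : (p.takeUntil y hy).edges = [s(x, y)] := by
    have := congrArg (fun q : G.Path x y => (q : G.Walk x y).edges) h2
    simpa using this
  exact p.edges_takeUntil_subset hy (by simp [h3])

private lemma auxNotMem (hac : G.IsAcyclic) {x z r : Fin n} (h : G.Adj x z)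
    {q : G.Walk z r} (hq : (SimpleGraph.Walk.cons h q).IsPath) {y : Fin n}
    (hadj : G.Adj x y) (hne : y ≠ z) : y ∉ (SimpleGraph.Walk.cons h q).support := by
  intro hmem
  have hedge := auxEdgeMem hac _ hq hadj hmem
  rw [SimpleGraph.Walk.edges_cons, List.mem_cons] at hedge
  rcases hedge with h1 | h1
  · rcases Sym2.eq_iff.mp h1 with ⟨_, h2⟩ | ⟨h2, _⟩
    · exact hne h2
    · exact h.ne h2
  · have hx : x ∈ q.support := SimpleGraph.Walk.fst_mem_support_of_mem_edges q h1
    exact ((SimpleGraph.Walk.cons_isPath_iff h q).mp hq).2 hx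

private lemma keyIncrease [DecidableRel G.Adj] (ω : Sym2 (Fin n) → ℕ) (r : Fin n)
    (htree : G.IsTree) (hroot : IsStrictlyIncreasingRoot G ω r) :
    ∀ (x : Fin n) (p : G.Walk x r), p.IsPath → ∀ i : ℕ, i + 2 < p.support.length →
      ω s(p.support.getD i x, p.support.getD (i + 1) x) <
        ω s(p.support.getD (i + 1) x, p.support.getD (i + 2) x) := by
  suffices H : ∀ (k : ℕ) (x : Fin n) (p : G.Walk x r), n - p.support.length = k →
      p.IsPath → ∀ i : ℕ, i + 2 < p.support.length →
      ω s(p.support.getD i x, p.support.getD (i + 1) x) <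
        ω s(p.support.getD (i + 1) x, p.support.getD (i + 2) x) by
    exact fun x p hp => H _ x p rfl hp
  intro k
  induction k using Nat.strong_induction_on with
  | _ k IH =>
  intro x p hk hp i hi
  by_cases hdeg : G.degree x = 1
  · exact hroot x hdeg p hp i hi
  · cases p with
    | nil =>
      simp only [SimpleGraph.Walk.support_nil, List.length_singleton] at hi
      omega
    | @cons _ y _ h q =>
      have hy : y ∈ G.neighborFinset x := (SimpleGraph.mem_neighborFinset G x y).mpr h
      have hd : G.degree x = (G.neighborFinset x).card := rfl
      have h0 : 0 < (G.neighborFinset x).card := Finset.card_pos.mpr ⟨y, hy⟩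
      have hcard : 1 < (G.neighborFinset x).card := by omega
      obtain ⟨w, hw, hwy⟩ := Finset.exists_mem_ne hcard y
      have hxw : G.Adj x w := (SimpleGraph.mem_neighborFinset G x w).mp hw
      have hwsup : w ∉ (SimpleGraph.Walk.cons h q).support :=
        auxNotMem htree.IsAcyclic h hp hxw hwy
      have hp' : (SimpleGraph.Walk.cons hxw.symm (SimpleGraph.Walk.cons h q)).IsPath :=
        hp.cons hwsup
      have hnodup := hp'.support_nodup.length_le_card
      rw [SimpleGraph.Walk.support_cons, List.length_cons, Fintype.card_fin] at hnodup
      have hlt : n - (SimpleGraph.Walk.cons hxw.symm (SimpleGraph.Walk.cons h q)).support.length < k := by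
        rw [SimpleGraph.Walk.support_cons, List.length_cons]
        omega
      have hIH := IH _ hlt w _ rfl hp' (i + 1)
        (by rw [SimpleGraph.Walk.support_cons, List.length_cons]; omega)
      rw [SimpleGraph.Walk.support_cons] at hIH
      simp only [List.getD_cons_succ] at hIH
      rw [auxGetD _ i (by omega) w x, auxGetD _ (i+1) (by omega) w x,
        auxGetD _ (i+2) hi w x] at hIH
      exact hIH

end AuxLcm
section AuxLcm2

variable {n : ℕ} {G : SimpleGraph (Fin n)}

private lemma supLtKey [DecidableRel G.Adj] (ω : Sym2 (Fin n) → ℕ) (r : Fin n)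
    (htree : G.IsTree) (hpos : ∀ e ∈ G.edgeSet, 1 ≤ ω e)
    (hroot : IsStrictlyIncreasingRoot G ω r)
    {u v : Fin n} (hadj : G.Adj u v) (q : G.Walk v r) (hq : q.IsPath)
    (hu : u ∉ q.support) (W : Finset (Sym2 (Fin n))) (hW : W ⊆ G.edgeFinset)
    (he : s(u, v) ∉ W) : (W.sup fun f => edgeExp ω f u) < ω s(u, v) := by
  have hpos' : 0 < ω s(u, v) := hpos _ ((SimpleGraph.mem_edgeSet G).mpr hadj)
  rw [Finset.sup_lt_iff (by simpa using hpos')]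
  intro f hf
  by_cases hmem : u ∈ f
  · have hfe : G.Adj u (Sym2.Mem.other hmem) := by
      have : f ∈ G.edgeSet := (SimpleGraph.mem_edgeFinset).mp (hW hf)
      rw [← Sym2.other_spec hmem] at this
      exact this
    set b := Sym2.Mem.other hmem with hb
    have hfeq : f = s(u, b) := (Sym2.other_spec hmem).symm
    have hbv : b ≠ v := by
      intro hbeq
      rw [hfeq, hbeq] at hf
      exact he hf
    have hconsp : (SimpleGraph.Walk.cons hadj q).IsPath := hq.cons hu
    have hbsup : b ∉ (SimpleGraph.Walk.cons hadj q).support :=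
      auxNotMem htree.IsAcyclic hadj hconsp hfe hbv
    have hp1 : (SimpleGraph.Walk.cons hfe.symm (SimpleGraph.Walk.cons hadj q)).IsPath :=
      hconsp.cons hbsup
    have hqlen : 0 < q.support.length := List.length_pos_iff.mpr q.support_ne_nil
    have hkey := keyIncrease ω r htree hroot b _ hp1 0 (by
      rw [SimpleGraph.Walk.support_cons, SimpleGraph.Walk.support_cons,
        List.length_cons, List.length_cons]
      omega)
    rw [SimpleGraph.Walk.support_cons, SimpleGraph.Walk.support_cons,
      q.support_eq_cons] at hkey
    simp only [List.getD_cons_zero, List.getD_cons_succ] at hkey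
    calc edgeExp ω f u = ω s(b, u) := by
          rw [hfeq]; simp [edgeExp, Sym2.eq_swap (a := u) (b := b)]
      _ < ω s(u, v) := hkey
  · simp [edgeExp, hmem, hpos']

private lemma contraAt (ω : Sym2 (Fin n) → ℕ) (W₁ W₂ : Finset (Sym2 (Fin n)))
    (heq : W₁.sup (edgeExp ω) = W₂.sup (edgeExp ω)) {e : Sym2 (Fin n)} (he₂ : e ∈ W₂)
    {u : Fin n} (hu : u ∈ e) (hlt : (W₁.sup fun f => edgeExp ω f u) < ω e) : False := by
  have hge := Finset.le_sup (f := fun f => edgeExp ω f u) he₂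
  have h1 : edgeExp ω e u = ω e := by simp [edgeExp, hu]
  simp only [h1] at hge
  have h2 : W₁.sup (edgeExp ω) u = W₂.sup (edgeExp ω) u := congrFun heq u
  rw [Finset.sup_apply, Finset.sup_apply] at h2
  omega

end AuxLcm2

/-- **Lemma.** Let `(G_ω, r)` be a strictly increasing weighted tree. For subsets
`W₁ ⊊ W₂` of the minimal generating set of `I(G_ω)` (identified with subsets of the
edge set of `G`), the lcm's of `W₁` and `W₂` differ: their exponent vectors
(pointwise sups of the generators' exponent vectors) are distinct. -/
theorem lcm_strict_monotone_of_strictly_increasing {n : ℕ} (G : SimpleGraph (Fin n))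
    [DecidableRel G.Adj] (ω : Sym2 (Fin n) → ℕ) (r : Fin n)
    (htree : G.IsTree) (hpos : ∀ e ∈ G.edgeSet, 1 ≤ ω e)
    (hroot : IsStrictlyIncreasingRoot G ω r) :
    ∀ W₁ W₂ : Finset (Sym2 (Fin n)), W₁ ⊆ G.edgeFinset → W₂ ⊆ G.edgeFinset →
      W₁ ⊂ W₂ → W₁.sup (edgeExp ω) ≠ W₂.sup (edgeExp ω) := by
  intro W₁ W₂ h₁ h₂ hss heq
  obtain ⟨e, heW₂, heW₁⟩ := Finset.exists_of_ssubset hss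
  have heE : e ∈ G.edgeSet := (SimpleGraph.mem_edgeFinset).mp (h₂ heW₂)
  induction e using Sym2.ind with
  | _ u v =>
  have hadj : G.Adj u v := heE
  obtain ⟨q0⟩ := htree.isConnected.preconnected v r
  have hqpath : q0.bypass.IsPath := q0.bypass_isPath
  set q := q0.bypass with hqdef
  by_cases hu : u ∈ q.support
  · -- v is the child: use the path from u to r obtained by dropping
    set q2 := q.dropUntil u hu with hq2def
    have hq2 : q2.IsPath := hqpath.dropUntil hu
    have hv : v ∉ q2.support := by
      intro hvmem
      have hsplit := q.take_spec hu
      have hnd := hqpath.support_nodup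
      rw [← hsplit, SimpleGraph.Walk.support_append, List.nodup_append] at hnd
      rw [q2.support_eq_cons] at hvmem
      rcases List.mem_cons.mp hvmem with hveq | hvtail
      · exact hadj.ne' hveq
      · exact hnd.2.2 _ ((q.takeUntil u hu).start_mem_support) _ hvtail rfl
    have hlt := supLtKey ω r htree hpos hroot hadj.symm q2 hq2 hv W₁ h₁
      (by rwa [Sym2.eq_swap])
    rw [Sym2.eq_swap (a := v) (b := u)] at hlt
    exact contraAt ω W₁ W₂ heq heW₂ (u := v) (by simp) hlt
  · have hlt := supLtKey ω r htree hpos hroot hadj q hqpath hu W₁ h₁ heW₁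
    exact contraAt ω W₁ W₂ heq heW₂ (u := u) (by simp) hlt
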